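/- Let Σ_m be a real n×n positive semidefinite matrix, Φ a real ℓ×n matrix with rank(Σ_m^{1/2}·Φᵀ·Φ·Σ_m^{1/2}) = rank(Σ_m), and μ ∈ range(Σ_m). For σ² > 0 define W_m(σ²) := Σ_m·Φᵀ·(σ²·I_ℓ + Φ·Σ_m·Φᵀ)⁻¹. Then lim_{σ²→0⁺} tr(W_m(σ²)·Φ·(μ·μᵀ)·Φᵀ·W_m(σ²)ᵀ) = ‖μ‖², i.e., ‖W_m(σ²)·Φ·μ‖² tends to ‖μ‖² as σ² → 0⁺. -/

import Mathlib

open Matrix Filter Topology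

section OldSqrt

open scoped ComplexOrder

/-- The positive semidefinite square root of a positive semidefinite matrix
(the Mathlib definition of December 2024, since removed from Mathlib). -/
noncomputable def Matrix.PosSemidef.sqrt {n 𝕜 : Type*} [Fintype n] [DecidableEq n] [RCLike 𝕜]
    {A : Matrix n n 𝕜} (hA : A.PosSemidef) : Matrix n n 𝕜 :=
  hA.1.eigenvectorUnitary.1 * diagonal ((↑) ∘ (Real.sqrt ·) ∘ hA.1.eigenvalues) *
  (star hA.1.eigenvectorUnitary : Matrix n n 𝕜)

end OldSqrt

lemma oldSqrt_posSemidef {n : ℕ} {Sm : Matrix (Fin n) (Fin n) ℝ} (hA : Sm.PosSemidef) :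
    hA.sqrt.PosSemidef := by
  unfold Matrix.PosSemidef.sqrt
  apply PosSemidef.mul_mul_conjTranspose_same
  refine posSemidef_diagonal_iff.mpr fun i => ?_
  simp only [Function.comp_apply]
  exact Real.sqrt_nonneg _

lemma oldSqrt_mul_self {n : ℕ} {Sm : Matrix (Fin n) (Fin n) ℝ} (hA : Sm.PosSemidef) :
    hA.sqrt * hA.sqrt = Sm := by
  unfold Matrix.PosSemidef.sqrt
  have hC : star hA.1.eigenvectorUnitary.1 * hA.1.eigenvectorUnitary.1 = 1 :=
    Unitary.coe_star_mul_self _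
  have hS := hA.1.spectral_theorem
  rw [Unitary.conjStarAlgAut_apply] at hS
  set U := hA.1.eigenvectorUnitary.1
  set D := diagonal ((↑) ∘ (Real.sqrt ·) ∘ hA.1.eigenvalues : Fin n → ℝ)
  calc U * D * star U * (U * D * star U) = U * (D * (star U * U) * D) * star U := by
        simp only [Matrix.mul_assoc]
    _ = U * diagonal (RCLike.ofReal ∘ hA.1.eigenvalues) * star U := by
        have hD : D * D = diagonal (RCLike.ofReal ∘ hA.1.eigenvalues) := by
          rw [diagonal_mul_diagonal]
          congr 1
          funext i
          simp [Real.mul_self_sqrt (hA.eigenvalues_nonneg i)]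
        rw [hC, Matrix.mul_one, hD]
    _ = Sm := hS.symm

lemma trace_conj_vecMulVec {k n : ℕ} (C : Matrix (Fin k) (Fin n) ℝ) (μ : Fin n → ℝ) :
    (C * Matrix.vecMulVec μ μ * Cᵀ).trace = (C *ᵥ μ) ⬝ᵥ (C *ᵥ μ) := by
  have h1 : C * Matrix.vecMulVec μ μ * Cᵀ
      = Matrix.replicateCol Unit (C *ᵥ μ) * Matrix.replicateRow Unit (C *ᵥ μ) := by
    rw [Matrix.vecMulVec_eq Unit]
    calc C * (Matrix.replicateCol Unit μ * Matrix.replicateRow Unit μ) * Cᵀ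
        = (C * Matrix.replicateCol Unit μ) * (Matrix.replicateRow Unit μ * Cᵀ) := by
          rw [Matrix.mul_assoc, Matrix.mul_assoc, Matrix.mul_assoc]
      _ = Matrix.replicateCol Unit (C *ᵥ μ) * Matrix.replicateRow Unit (μ ᵥ* Cᵀ) := by
          rw [Matrix.replicateCol_mulVec, Matrix.replicateRow_vecMul]
      _ = Matrix.replicateCol Unit (C *ᵥ μ) * Matrix.replicateRow Unit (C *ᵥ μ) := by
          rw [Matrix.vecMul_transpose]
  rw [h1, Matrix.trace_replicateCol_mul_replicateRow]

lemma dot_coord_sq_le {n : ℕ} (x : Fin n → ℝ) (i : Fin n) : x i ^ 2 ≤ x ⬝ᵥ x := by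
  have h : x ⬝ᵥ x = ∑ j, x j ^ 2 := by simp [dotProduct, sq]
  rw [h]
  exact Finset.single_le_sum (f := fun j => x j ^ 2) (fun j _ => sq_nonneg _) (Finset.mem_univ i)

lemma dot_self_nonneg' {n : ℕ} (x : Fin n → ℝ) : 0 ≤ x ⬝ᵥ x :=
  Finset.sum_nonneg fun j _ => mul_self_nonneg _

lemma quad_bound {n : ℕ} (Q : Matrix (Fin n) (Fin n) ℝ) (x : Fin n → ℝ) :
    x ⬝ᵥ (Q *ᵥ x) ≤ (∑ i, ∑ j, |Q i j|) * (x ⬝ᵥ x) := by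
  have hxx : 0 ≤ x ⬝ᵥ x := dot_self_nonneg' x
  have key : ∀ i j : Fin n, x i * (Q i j * x j) ≤ |Q i j| * (x ⬝ᵥ x) := by
    intro i j
    have hij : |x i * x j| ≤ x ⬝ᵥ x := by
      have hi := dot_coord_sq_le x i
      have hj := dot_coord_sq_le x j
      have h2 : |x i * x j| ≤ (x i ^ 2 + x j ^ 2) / 2 := by
        rw [abs_mul]
        nlinarith [sq_nonneg (|x i| - |x j|), sq_abs (x i), sq_abs (x j)]
      linarith
    calc x i * (Q i j * x j) ≤ |x i * (Q i j * x j)| := le_abs_self _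
      _ = |Q i j| * |x i * x j| := by rw [← abs_mul]; ring_nf
      _ ≤ |Q i j| * (x ⬝ᵥ x) := mul_le_mul_of_nonneg_left hij (abs_nonneg _)
  calc x ⬝ᵥ (Q *ᵥ x) = ∑ i, ∑ j, x i * (Q i j * x j) := by
        simp [dotProduct, Matrix.mulVec, Finset.mul_sum]
      _ ≤ ∑ i, ∑ j, |Q i j| * (x ⬝ᵥ x) :=
        Finset.sum_le_sum fun i _ => Finset.sum_le_sum fun j _ => key i j
      _ = (∑ i, ∑ j, |Q i j|) * (x ⬝ᵥ x) := by rw [Finset.sum_mul]; simp [Finset.sum_mul]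

lemma psd_smul {n : ℕ} {P : Matrix (Fin n) (Fin n) ℝ} (hP : P.PosSemidef) {c : ℝ} (hc : 0 ≤ c) :
    (c • P).PosSemidef := by
  refine .of_dotProduct_mulVec_nonneg ?_ fun x => ?_
  · rw [Matrix.IsHermitian, Matrix.conjTranspose_smul, hP.1.eq, star_trivial]
  · rw [Matrix.smul_mulVec, dotProduct_smul]
    exact mul_nonneg hc (hP.dotProduct_mulVec_nonneg x)

lemma dot_mulVec_self {k n : ℕ} (D : Matrix (Fin k) (Fin n) ℝ) (x : Fin n → ℝ) :
    (D *ᵥ x) ⬝ᵥ (D *ᵥ x) = x ⬝ᵥ ((Dᵀ * D) *ᵥ x) := by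
  conv_rhs => rw [← Matrix.mulVec_mulVec, Matrix.dotProduct_mulVec, Matrix.vecMul_transpose]

/-- If rank(Σ_m^{1/2}·Φᵀ·Φ·Σ_m^{1/2}) = rank(Σ_m) and μ ∈ range(Σ_m), then,
with W_m(σ²) = Σ_m·Φᵀ·(σ²·I + Φ·Σ_m·Φᵀ)⁻¹, tr(W_m(σ²)·Φ·(μ·μᵀ)·Φᵀ·W_m(σ²)ᵀ) → ‖μ‖² = μ ⬝ μ
as σ² → 0⁺. -/
theorem stmt_17 {n l : ℕ} (Sm : Matrix (Fin n) (Fin n) ℝ) (hSm : Sm.PosSemidef)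
    (Φ : Matrix (Fin l) (Fin n) ℝ)
    (hrank : (hSm.sqrt * Φᵀ * Φ * hSm.sqrt).rank = Sm.rank)
    (μ : Fin n → ℝ) (hμ : μ ∈ LinearMap.range Sm.mulVecLin)
    (W : ℝ → Matrix (Fin n) (Fin l) ℝ)
    (hW : ∀ σ2 : ℝ, W σ2 = Sm * Φᵀ * (σ2 • (1 : Matrix (Fin l) (Fin l) ℝ) + Φ * Sm * Φᵀ)⁻¹) :
    Tendsto (fun σ2 : ℝ => (W σ2 * Φ * Matrix.vecMulVec μ μ * Φᵀ * (W σ2)ᵀ).trace)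
      (nhdsWithin 0 (Set.Ioi 0)) (nhds (μ ⬝ᵥ μ)) := by
  classical
  set A := hSm.sqrt with hAdef
  have hApsd : A.PosSemidef := oldSqrt_posSemidef hSm
  have hAt : Aᵀ = A := by
    have h := hApsd.isHermitian
    rwa [Matrix.IsHermitian, Matrix.conjTranspose_eq_transpose_of_trivial] at h
  have hAA : A * A = Sm := oldSqrt_mul_self hSm
  set M := A * Φᵀ * Φ * A with hMdef
  have hMt : Mᵀ = M := by
    rw [hMdef]
    simp [Matrix.transpose_mul, hAt, Matrix.mul_assoc]
  have hMeq : M = (Φ * A)ᵀ * (Φ * A) := by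
    rw [Matrix.transpose_mul, hAt, hMdef]
    simp [Matrix.mul_assoc]
  have hMpsd : M.PosSemidef := by
    have h := Matrix.posSemidef_conjTranspose_mul_self (Φ * A)
    rwa [Matrix.conjTranspose_eq_transpose_of_trivial, ← hMeq] at h
  clear_value A M
  -- range equality
  have hrangeMA : LinearMap.range M.mulVecLin = LinearMap.range A.mulVecLin := by
    apply Submodule.eq_of_le_of_finrank_le
    · have h : M = A * (Φᵀ * Φ * A) := by rw [hMdef]; simp [Matrix.mul_assoc]
      rw [h, Matrix.mulVecLin_mul]
      exact LinearMap.range_comp_le_range _ _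
    · have h1 : A.rank = Sm.rank := by
        have h2 := Matrix.rank_transpose_mul_self A
        rw [hAt, hAA] at h2
        exact h2.symm
      show A.rank ≤ M.rank
      rw [h1, ← hrank]
  -- μ = (A * M) *ᵥ w
  obtain ⟨u, hu⟩ := hμ
  have hμA : μ = A *ᵥ (A *ᵥ u) := by
    rw [Matrix.mulVec_mulVec, hAA]; exact hu.symm
  have hvmem : A *ᵥ u ∈ LinearMap.range M.mulVecLin := by
    rw [hrangeMA]; exact ⟨u, rfl⟩
  obtain ⟨w, hw⟩ := hvmem
  have hw' : M *ᵥ w = A *ᵥ u := hw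
  have hμw : μ = (A * M) *ᵥ w := by
    rw [← Matrix.mulVec_mulVec, hw', hμA]
  -- constants
  set c1 : ℝ := ∑ i, ∑ j, |Sm i j| with hc1def
  have hc1 : 0 ≤ c1 := Finset.sum_nonneg fun i _ => Finset.sum_nonneg fun j _ => abs_nonneg _
  have hww : 0 ≤ w ⬝ᵥ w := dot_self_nonneg' w
  -- key estimate
  have key : ∀ σ2 : ℝ, 0 < σ2 → ∃ e : Fin n → ℝ,
      (W σ2 * Φ) *ᵥ μ = μ + e ∧ e ⬝ᵥ e ≤ σ2 ^ 2 * (c1 * (w ⬝ᵥ w)) := by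
    intro σ2 hσ2
    set S : Matrix (Fin n) (Fin n) ℝ := σ2 • (1 : Matrix (Fin n) (Fin n) ℝ) + M with hSdef
    set T : Matrix (Fin l) (Fin l) ℝ := σ2 • (1 : Matrix (Fin l) (Fin l) ℝ) + Φ * Sm * Φᵀ
      with hTdef
    have hSpd : S.PosDef := by
      have h1 : (σ2 • (1 : Matrix (Fin n) (Fin n) ℝ)).PosDef := by
        rw [Matrix.smul_one_eq_diagonal]
        exact Matrix.PosDef.diagonal fun _ => hσ2
      exact h1.add_posSemidef hMpsd
    have hPhiSm : (Φ * Sm * Φᵀ).PosSemidef := by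
      have h := hSm.mul_mul_conjTranspose_same Φ
      rwa [Matrix.conjTranspose_eq_transpose_of_trivial] at h
    have hTpd : T.PosDef := by
      have h1 : (σ2 • (1 : Matrix (Fin l) (Fin l) ℝ)).PosDef := by
        rw [Matrix.smul_one_eq_diagonal]
        exact Matrix.PosDef.diagonal fun _ => hσ2
      exact h1.add_posSemidef hPhiSm
    have hSdet : IsUnit S.det := hSpd.det_pos.ne'.isUnit
    have hTdet : IsUnit T.det := hTpd.det_pos.ne'.isUnit
    have hS1 : S * S⁻¹ = 1 := Matrix.mul_nonsing_inv S hSdet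
    have hS2 : S⁻¹ * S = 1 := Matrix.nonsing_inv_mul S hSdet
    have hT1 : T * T⁻¹ = 1 := Matrix.mul_nonsing_inv T hTdet
    have hSinvH : S⁻¹ᴴ = S⁻¹ := hSpd.inv.isHermitian
    have hSinvT : S⁻¹ᵀ = S⁻¹ := by
      rw [← Matrix.conjTranspose_eq_transpose_of_trivial]; exact hSinvH
    clear_value S T
    have push : S * (A * Φᵀ) = (A * Φᵀ) * T := by
      rw [hSdef, hTdef, Matrix.add_mul, Matrix.mul_add, Matrix.smul_mul, Matrix.mul_smul,
        Matrix.one_mul, Matrix.mul_one]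
      congr 1
      rw [hMdef, ← hAA]
      simp [Matrix.mul_assoc]
    have hpinv : (A * Φᵀ) * T⁻¹ = S⁻¹ * (A * Φᵀ) := by
      have h6 : S⁻¹ * (S * (A * Φᵀ) * T⁻¹) = S⁻¹ * ((A * Φᵀ) * T * T⁻¹) := by rw [push]
      rw [Matrix.mul_assoc (A * Φᵀ) T T⁻¹, hT1, Matrix.mul_one] at h6
      rw [← Matrix.mul_assoc S⁻¹ (S * (A * Φᵀ)) T⁻¹, ← Matrix.mul_assoc S⁻¹ S (A * Φᵀ), hS2,
        Matrix.one_mul] at h6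
      exact h6
    have hWeq : W σ2 * Φ * (A * M) = A * (S⁻¹ * (M * M)) := by
      have h7 : W σ2 = A * (S⁻¹ * (A * Φᵀ)) := by
        rw [hW σ2, ← hTdef, ← hAA, Matrix.mul_assoc A A Φᵀ, Matrix.mul_assoc A (A * Φᵀ) T⁻¹,
          hpinv]
      rw [h7, hMdef]
      simp only [Matrix.mul_assoc]
    have hSM : S * M = σ2 • M + M * M := by
      rw [hSdef, Matrix.add_mul, Matrix.smul_mul, Matrix.one_mul]
    have hbase : A * M = σ2 • (A * (S⁻¹ * M)) + A * (S⁻¹ * (M * M)) := by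
      conv_lhs => rw [← Matrix.one_mul M, ← hS2, Matrix.mul_assoc S⁻¹ S M, hSM]
      rw [Matrix.mul_add S⁻¹, Matrix.mul_smul, Matrix.mul_add A, Matrix.mul_smul]
    have hWfull : W σ2 * Φ * (A * M) = A * M + (-σ2) • (A * (S⁻¹ * M)) := by
      rw [hWeq, hbase, neg_smul]
      abel
    set z : Fin n → ℝ := (S⁻¹ * M) *ᵥ w with hzdef
    clear_value z
    refine ⟨(-σ2) • (A *ᵥ z), ?_, ?_⟩
    · conv_lhs => rw [hμw, Matrix.mulVec_mulVec, hWfull]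
      rw [Matrix.add_mulVec, ← hμw, Matrix.smul_mulVec, hzdef, Matrix.mulVec_mulVec]
    · -- the bound
      have hz1 : ((-σ2) • (A *ᵥ z)) ⬝ᵥ ((-σ2) • (A *ᵥ z))
          = σ2 ^ 2 * ((A *ᵥ z) ⬝ᵥ (A *ᵥ z)) := by
        rw [smul_dotProduct, dotProduct_smul, smul_eq_mul, smul_eq_mul]; ring
      have hz2 : (A *ᵥ z) ⬝ᵥ (A *ᵥ z) = z ⬝ᵥ (Sm *ᵥ z) := by
        rw [dot_mulVec_self, hAt, hAA]
      have hz3 : z ⬝ᵥ (Sm *ᵥ z) ≤ c1 * (z ⬝ᵥ z) := quad_bound Sm z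
      -- commutation
      have hcommMS : M * S = S * M := by
        rw [hSdef, Matrix.mul_add, Matrix.add_mul, Matrix.mul_smul, Matrix.smul_mul,
          Matrix.mul_one, Matrix.one_mul]
      have hcomm : S⁻¹ * M = M * S⁻¹ := by
        have h4 : S⁻¹ * (M * S) * S⁻¹ = S⁻¹ * (S * M) * S⁻¹ := by rw [hcommMS]
        rw [← Matrix.mul_assoc S⁻¹ M S, Matrix.mul_assoc (S⁻¹ * M) S S⁻¹, hS1, Matrix.mul_one,
          ← Matrix.mul_assoc S⁻¹ S M, hS2, Matrix.one_mul] at h4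
        exact h4
      have hDT : (S⁻¹ * M)ᵀ = M * S⁻¹ := by rw [Matrix.transpose_mul, hMt, hSinvT]
      have hK : ((σ2 * σ2) • (S⁻¹ * S⁻¹) + (2 * σ2) • (S⁻¹ * (M * S⁻¹))).PosSemidef := by
        apply Matrix.PosSemidef.add
        · apply psd_smul _ (by positivity)
          have h8 := Matrix.posSemidef_conjTranspose_mul_self S⁻¹
          rwa [hSinvH] at h8
        · apply psd_smul _ (by positivity)
          have h8 := hMpsd.mul_mul_conjTranspose_same S⁻¹
          rwa [hSinvH, Matrix.mul_assoc] at h8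
      have hMM : (M * S⁻¹) * (S⁻¹ * M) = S⁻¹ * (M * M) * S⁻¹ := by
        nth_rewrite 1 [← hcomm]
        nth_rewrite 2 [hcomm]
        simp [Matrix.mul_assoc]
      have hSS : S * S = (σ2 * σ2) • (1 : Matrix (Fin n) (Fin n) ℝ) + (2 * σ2) • M + M * M := by
        rw [hSdef]
        simp only [Matrix.add_mul, Matrix.mul_add, Matrix.smul_mul, Matrix.mul_smul,
          Matrix.one_mul, Matrix.mul_one]
        module
      have hone : S⁻¹ * (S * S) * S⁻¹ = 1 := by
        rw [← Matrix.mul_assoc S⁻¹ S S, hS2, Matrix.one_mul, hS1]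
      rw [hSS] at hone
      have hexp : S⁻¹ * ((σ2 * σ2) • (1 : Matrix (Fin n) (Fin n) ℝ) + (2 * σ2) • M + M * M)
            * S⁻¹
          = (σ2 * σ2) • (S⁻¹ * S⁻¹) + (2 * σ2) • (S⁻¹ * (M * S⁻¹)) + S⁻¹ * (M * M) * S⁻¹ := by
        simp only [Matrix.mul_add, Matrix.add_mul, Matrix.mul_smul, Matrix.smul_mul,
          Matrix.mul_one, Matrix.mul_assoc]
      rw [hexp] at hone
      have hKid : ((S⁻¹ * M)ᵀ * (S⁻¹ * M)) *ᵥ w =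
          (1 : Matrix (Fin n) (Fin n) ℝ) *ᵥ w
          - ((σ2 * σ2) • (S⁻¹ * S⁻¹) + (2 * σ2) • (S⁻¹ * (M * S⁻¹))) *ᵥ w := by
        have hKid' : S⁻¹ * (M * M) * S⁻¹
            = 1 - ((σ2 * σ2) • (S⁻¹ * S⁻¹) + (2 * σ2) • (S⁻¹ * (M * S⁻¹))) := by
          rw [← hone]; abel
        rw [hDT, hMM, hKid', Matrix.sub_mulVec]
      have hz4 : z ⬝ᵥ z ≤ w ⬝ᵥ w := by
        have h9 : z ⬝ᵥ z = w ⬝ᵥ (((S⁻¹ * M)ᵀ * (S⁻¹ * M)) *ᵥ w) := by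
          rw [hzdef, dot_mulVec_self]
        have h10 : 0 ≤ w ⬝ᵥ (((σ2 * σ2) • (S⁻¹ * S⁻¹) + (2 * σ2) • (S⁻¹ * (M * S⁻¹))) *ᵥ w) := by
          have h := hK.dotProduct_mulVec_nonneg w
          simpa using h
        rw [h9, hKid, dotProduct_sub, Matrix.one_mulVec]
        linarith
      rw [hz1, hz2]
      have h11 : z ⬝ᵥ (Sm *ᵥ z) ≤ c1 * (w ⬝ᵥ w) :=
        le_trans hz3 (mul_le_mul_of_nonneg_left hz4 hc1)
      exact mul_le_mul_of_nonneg_left h11 (sq_nonneg σ2)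
  -- trace identity
  have htr : ∀ σ2 : ℝ, (W σ2 * Φ * Matrix.vecMulVec μ μ * Φᵀ * (W σ2)ᵀ).trace
      = ((W σ2 * Φ) *ᵥ μ) ⬝ᵥ ((W σ2 * Φ) *ᵥ μ) := by
    intro σ2
    have h : W σ2 * Φ * Matrix.vecMulVec μ μ * Φᵀ * (W σ2)ᵀ
        = (W σ2 * Φ) * Matrix.vecMulVec μ μ * (W σ2 * Φ)ᵀ := by
      rw [Matrix.transpose_mul]
      simp [Matrix.mul_assoc]
    rw [h, trace_conj_vecMulVec]
  -- coordinatewise convergence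
  set cc : ℝ := Real.sqrt (c1 * (w ⬝ᵥ w)) with hccdef
  have hccn : 0 ≤ cc := Real.sqrt_nonneg _
  have hcoord : ∀ i : Fin n, Tendsto (fun σ2 : ℝ => ((W σ2 * Φ) *ᵥ μ) i)
      (nhdsWithin 0 (Set.Ioi 0)) (nhds (μ i)) := by
    intro i
    have hid : Tendsto (fun σ2 : ℝ => σ2) (nhdsWithin 0 (Set.Ioi 0)) (nhds 0) :=
      tendsto_id.mono_left nhdsWithin_le_nhds
    have hlow : Tendsto (fun σ2 : ℝ => μ i - σ2 * cc) (nhdsWithin 0 (Set.Ioi 0)) (nhds (μ i)) := by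
      have := tendsto_const_nhds (x := μ i) (f := nhdsWithin (0:ℝ) (Set.Ioi 0)) |>.sub
        (hid.mul_const cc)
      simpa using this
    have hhigh : Tendsto (fun σ2 : ℝ => μ i + σ2 * cc) (nhdsWithin 0 (Set.Ioi 0))
        (nhds (μ i)) := by
      have := tendsto_const_nhds (x := μ i) (f := nhdsWithin (0:ℝ) (Set.Ioi 0)) |>.add
        (hid.mul_const cc)
      simpa using this
    apply tendsto_of_tendsto_of_tendsto_of_le_of_le' hlow hhigh
    · filter_upwards [self_mem_nhdsWithin] with σ2 hσ2
      obtain ⟨e, he, hb⟩ := key σ2 hσ2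
      have hei : |e i| ≤ σ2 * cc := by
        calc |e i| = Real.sqrt (e i ^ 2) := (Real.sqrt_sq_eq_abs _).symm
          _ ≤ Real.sqrt (σ2 ^ 2 * (c1 * (w ⬝ᵥ w))) :=
            Real.sqrt_le_sqrt (le_trans (dot_coord_sq_le e i) hb)
          _ = σ2 * cc := by
            rw [Real.sqrt_mul (sq_nonneg σ2), Real.sqrt_sq (le_of_lt hσ2), hccdef]
      have hgi : ((W σ2 * Φ) *ᵥ μ) i = μ i + e i := by rw [he]; simp
      rw [hgi]
      have := (abs_le.mp hei).1
      linarith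
    · filter_upwards [self_mem_nhdsWithin] with σ2 hσ2
      obtain ⟨e, he, hb⟩ := key σ2 hσ2
      have hei : |e i| ≤ σ2 * cc := by
        calc |e i| = Real.sqrt (e i ^ 2) := (Real.sqrt_sq_eq_abs _).symm
          _ ≤ Real.sqrt (σ2 ^ 2 * (c1 * (w ⬝ᵥ w))) :=
            Real.sqrt_le_sqrt (le_trans (dot_coord_sq_le e i) hb)
          _ = σ2 * cc := by
            rw [Real.sqrt_mul (sq_nonneg σ2), Real.sqrt_sq (le_of_lt hσ2), hccdef]
      have hgi : ((W σ2 * Φ) *ᵥ μ) i = μ i + e i := by rw [he]; simp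
      rw [hgi]
      have := (abs_le.mp hei).2
      linarith
  -- assemble
  have hdot : Tendsto (fun σ2 : ℝ => ((W σ2 * Φ) *ᵥ μ) ⬝ᵥ ((W σ2 * Φ) *ᵥ μ))
      (nhdsWithin 0 (Set.Ioi 0)) (nhds (μ ⬝ᵥ μ)) := by
    simp only [dotProduct]
    exact tendsto_finset_sum _ fun i _ => (hcoord i).mul (hcoord i)
  exact hdot.congr fun σ2 => (htr σ2).symm
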